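/- Let r ≥ 1 be an integer, let x_1,…,x_r be complex numbers such that x_j ∉ {0,1,−1} for all j and x_j² ≠ x_k² for j ≠ k, and let α, β, γ be complex numbers. Then ∑_{k=1}^r (a(x,k) + b(x,k)) = ∑_{k=1}^r ∑_{J ⊆ {1,…,r}∖{k}} γ^{|J|} · p_{|J|}(x_k) / ((x_k² − 1) · ∏_{j∈J}(x_k² − x_j²)), where the inner sum runs over all subsets J of {1,…,r} not containing k. -/

import Mathlib

open Finset

theorem sum_ab_as_subset_sum (r : ℕ) (hr : 1 ≤ r) (x : Fin r → ℂ)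
    (hx0 : ∀ j, x j ≠ 0) (hx1 : ∀ j, x j ≠ 1) (hxm1 : ∀ j, x j ≠ -1)
    (hxx : ∀ j k : Fin r, j ≠ k → (x j) ^ 2 ≠ (x k) ^ 2)
    (α β γ : ℂ) :
    (∑ k : Fin r,
      (((x k + α) * (x k + β)) / (x k * (x k + 1)) *
          ∏ j ∈ univ.erase k, ((x k + γ) ^ 2 - (x j) ^ 2) / ((x k) ^ 2 - (x j) ^ 2)
        + ((x k - α) * (x k - β)) / (x k * (x k - 1)) *
          ∏ j ∈ univ.erase k, ((x k - γ) ^ 2 - (x j) ^ 2) / ((x k) ^ 2 - (x j) ^ 2)))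
      = ∑ k : Fin r, ∑ J ∈ (univ.erase k).powerset,
          γ ^ J.card *
            ((1 / x k) *
              ((x k + α) * (x k + β) * (x k - 1) * (γ + 2 * x k) ^ J.card
                + (x k - α) * (x k - β) * (x k + 1) * (γ - 2 * x k) ^ J.card)) /
            (((x k) ^ 2 - 1) * ∏ j ∈ J, ((x k) ^ 2 - (x j) ^ 2)) := by
  apply Finset.sum_congr rfl
  intro k _
  have hxk := hx0 k
  have hk1 : x k + 1 ≠ 0 := by
    intro h; apply hxm1 k; linear_combination h
  have hk2 : x k - 1 ≠ 0 := sub_ne_zero.mpr (hx1 k)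
  have hne : ∀ j ∈ univ.erase k, (x k) ^ 2 - (x j) ^ 2 ≠ 0 := by
    intro j hj
    exact sub_ne_zero.mpr (hxx k j (Ne.symm (Finset.ne_of_mem_erase hj)))
  have h1 : ∏ j ∈ univ.erase k, ((x k + γ) ^ 2 - (x j) ^ 2) / ((x k) ^ 2 - (x j) ^ 2)
      = ∏ j ∈ univ.erase k, (γ * (γ + 2 * x k) / ((x k) ^ 2 - (x j) ^ 2) + 1) := by
    apply Finset.prod_congr rfl
    intro j hj
    have hd := hne j hj
    field_simp
    ring
  have h2 : ∏ j ∈ univ.erase k, ((x k - γ) ^ 2 - (x j) ^ 2) / ((x k) ^ 2 - (x j) ^ 2)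
      = ∏ j ∈ univ.erase k, (γ * (γ - 2 * x k) / ((x k) ^ 2 - (x j) ^ 2) + 1) := by
    apply Finset.prod_congr rfl
    intro j hj
    have hd := hne j hj
    field_simp
    ring
  rw [h1, h2, Finset.prod_add, Finset.prod_add]
  simp only [Finset.prod_const_one, mul_one, Finset.mul_sum, ← Finset.sum_add_distrib]
  apply Finset.sum_congr rfl
  intro J hJ
  have hJsub : J ⊆ univ.erase k := Finset.mem_powerset.mp hJ
  have hD : ∏ j ∈ J, ((x k) ^ 2 - (x j) ^ 2) ≠ 0 :=
    Finset.prod_ne_zero_iff.mpr fun j hj => hne j (hJsub hj)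
  rw [Finset.prod_div_distrib, Finset.prod_const, Finset.prod_div_distrib,
    Finset.prod_const, mul_pow, mul_pow]
  have hsq : (x k) ^ 2 - 1 = (x k - 1) * (x k + 1) := by ring
  rw [hsq]
  field_simp
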